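/- For every n ≥ 1, the coefficients of the polynomial (−1)^{n−1}·p_n(x) are positive and form a log-concave (hence unimodal) sequence. -/

import Mathlib

open Polynomial Finset

/-- The Kalugin–Jeffrey polynomials: `p_1(x) = 1`,
`p_{n+1}(x) = −(nx + 3n − 1)p_n(x) + (1+x)p_n'(x)`. -/
noncomputable def p : ℕ → Polynomial ℤ
  | 0 => 0
  | 1 => 1
  | n+2 => -(C ((n : ℤ) + 1) * X + C (3 * ((n : ℤ) + 1) - 1)) * p (n+1) +
      (1 + X) * derivative (p (n+1))


/-- TP₂ inequality for binomial coefficients. -/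
lemma tp2 (a b p m : ℕ) (hab : a ≤ b) :
    a.choose (p+m) * b.choose p ≤ a.choose p * b.choose (p+m) := by
  induction m with
  | zero => simp
  | succ m ih =>
    have h1 : a.choose (p+m+1) * (p+m+1) = a.choose (p+m) * (a - (p+m)) :=
      Nat.choose_succ_right_eq a (p+m)
    have h2 : b.choose (p+m+1) * (p+m+1) = b.choose (p+m) * (b - (p+m)) :=
      Nat.choose_succ_right_eq b (p+m)
    have hpos : 0 < p + m + 1 := by omega
    apply Nat.le_of_mul_le_mul_right _ hpos
    calc a.choose (p+m+1) * b.choose p * (p+m+1)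
        = (a.choose (p+m+1) * (p+m+1)) * b.choose p := by ring
      _ = a.choose (p+m) * (a - (p+m)) * b.choose p := by rw [h1]
      _ ≤ a.choose (p+m) * (b - (p+m)) * b.choose p := by
          apply Nat.mul_le_mul_right
          exact Nat.mul_le_mul_left _ (Nat.sub_le_sub_right hab _)
      _ = (a.choose (p+m) * b.choose p) * (b - (p+m)) := by ring
      _ ≤ (a.choose p * b.choose (p+m)) * (b - (p+m)) := Nat.mul_le_mul_right _ ih
      _ = a.choose p * (b.choose (p+m) * (b - (p+m))) := by ring
      _ = a.choose p * (b.choose (p+m+1) * (p+m+1)) := by rw [h2]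
      _ = a.choose p * b.choose (p+m+1) * (p+m+1) := by ring

lemma tp2' (a b p q : ℕ) (hab : a ≤ b) (hpq : p ≤ q) :
    a.choose q * b.choose p ≤ a.choose p * b.choose q := by
  obtain ⟨m, rfl⟩ := Nat.exists_eq_add_of_le hpq
  exact tp2 a b p m hab

/-- Shifted TP₂-type inequality. -/
lemma pair1 (a b i : ℕ) (hab : a ≤ b) :
    (a+1).choose (i+2) * b.choose i ≤ a.choose i * (b+1).choose (i+2) := by
  rw [Nat.choose_succ_succ a (i+1), Nat.choose_succ_succ b (i+1)]
  calc (a.choose (i+1) + a.choose (i+2)) * b.choose i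
      = a.choose (i+1) * b.choose i + a.choose (i+2) * b.choose i := by ring
    _ ≤ a.choose i * b.choose (i+1) + a.choose i * b.choose (i+2) := by
        have := tp2 a b i 1 hab
        have := tp2 a b i 2 hab
        omega
    _ = a.choose i * (b.choose (i+1) + b.choose (i+2)) := by ring

/-- The pure-binomial antidiagonal term. -/
def gg (s i j : ℕ) : ℤ :=
  (j.choose (i+1) * (s-j).choose (i+1) : ℕ) - (j.choose i * (s-j).choose (i+2) : ℕ)

/-- Closed form for tail sums of `gg` along an antidiagonal. -/
def EE (s i t : ℕ) : ℤ :=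
  ((t-1).choose i * (s-t+1).choose (i+2) : ℕ) + ((t-1).choose (i+1) * (s-t).choose (i+2) : ℕ)
    - (t.choose (i+2) * (s-t).choose i : ℕ) - ((t-1).choose (i+2) * (s-t).choose (i+1) : ℕ)

lemma E_nonneg (s i t : ℕ) (ht : 1 ≤ t) (hs : 2*t ≤ s+1) : 0 ≤ EE s i t := by
  obtain ⟨u, rfl⟩ : ∃ u, t = u+1 := ⟨t-1, by omega⟩
  have hab : u ≤ s - (u+1) := by omega
  have h1 : ((u+1).choose (i+2) * (s-(u+1)).choose i : ℤ)
      ≤ (u.choose i * ((s-(u+1))+1).choose (i+2) : ℕ) := by exact_mod_cast pair1 u _ i hab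
  have h2 : (u.choose (i+2) * (s-(u+1)).choose (i+1) : ℤ)
      ≤ (u.choose (i+1) * (s-(u+1)).choose (i+2) : ℕ) := by
    exact_mod_cast tp2' u _ (i+1) (i+2) hab (by omega)
  have e1 : u + 1 - 1 = u := by omega
  unfold EE
  rw [e1]
  omega
lemma E_empty (s i t : ℕ) (ht : 1 ≤ t) (hs : 2*t = s+1) : EE s i t = 0 := by
  obtain ⟨u, rfl⟩ : ∃ u, t = u+1 := ⟨t-1, by omega⟩
  have e1 : u + 1 - 1 = u := by omega
  have e3 : s - (u+1) + 1 = u + 1 := by omega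
  have e2 : s - (u+1) = u := by omega
  unfold EE
  rw [e1, e3, e2]
  push_cast
  ring
lemma E_mid (s i t : ℕ) (ht : 1 ≤ t) (hs : s = 2*t) : EE s i t = gg s i t := by
  obtain ⟨u, rfl⟩ : ∃ u, t = u+1 := ⟨t-1, by omega⟩
  have e1 : u + 1 - 1 = u := by omega
  have e3 : s - (u+1) + 1 = u + 2 := by omega
  have e2 : s - (u+1) = u + 1 := by omega
  unfold EE gg
  rw [e1, e3, e2]
  have p1 : (u+2).choose (i+2) = (u+1).choose (i+1) + (u+1).choose (i+2) :=
    Nat.choose_succ_succ (u+1) (i+1)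
  have p2 : (u+1).choose (i+1) = u.choose i + u.choose (i+1) := Nat.choose_succ_succ u i
  have p3 : (u+1).choose (i+2) = u.choose (i+1) + u.choose (i+2) := Nat.choose_succ_succ u (i+1)
  rw [p1, p2, p3]
  push_cast
  ring
lemma E_step (s i t : ℕ) (ht : 1 ≤ t) (hs : 2*t+1 ≤ s) :
    EE s i t = gg s i t + gg s i (s-t) + EE s i (t+1) := by
  obtain ⟨u, rfl⟩ : ∃ u, t = u+1 := ⟨t-1, by omega⟩
  obtain ⟨m, rfl⟩ : ∃ m, s = u + m + 2 := ⟨s - u - 2, by omega⟩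
  have e1 : u + 1 - 1 = u := by omega
  have e3 : u + m + 2 - (u+1) + 1 = m + 2 := by omega
  have e2 : u + m + 2 - (u+1) = m + 1 := by omega
  have e4 : u + 1 + 1 - 1 = u + 1 := by omega
  have e6 : u + m + 2 - (u+1+1) + 1 = m + 1 := by omega
  have e5 : u + m + 2 - (u+1+1) = m := by omega
  have e7 : u + m + 2 - (m+1) = u + 1 := by omega
  unfold EE gg
  rw [e1, e3, e2, e4, e6, e5, e7]
  have p1 : (m+2).choose (i+2) = (m+1).choose (i+1) + (m+1).choose (i+2) :=
    Nat.choose_succ_succ (m+1) (i+1)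
  have p2 : (m+1).choose (i+1) = m.choose i + m.choose (i+1) := Nat.choose_succ_succ m i
  have p3 : (m+1).choose (i+2) = m.choose (i+1) + m.choose (i+2) := Nat.choose_succ_succ m (i+1)
  have p4 : (u+2).choose (i+2) = (u+1).choose (i+1) + (u+1).choose (i+2) :=
    Nat.choose_succ_succ (u+1) (i+1)
  have p5 : (u+1).choose (i+1) = u.choose i + u.choose (i+1) := Nat.choose_succ_succ u i
  have p6 : (u+1).choose (i+2) = u.choose (i+1) + u.choose (i+2) := Nat.choose_succ_succ u (i+1)
  rw [p1, p2, p3, p4, p5, p6]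
  push_cast
  ring
lemma E_one (s i : ℕ) (hs : 2 ≤ s) : gg s i 0 + gg s i s + EE s i 1 = 0 := by
  have e1 : s - 0 = s := by omega
  have e2 : s - s = 0 := by omega
  have e3 : (1:ℕ) - 1 = 0 := rfl
  have e4 : s - 1 + 1 = s := by omega
  unfold EE gg
  rw [e1, e2, e3, e4]
  have z1 : (0:ℕ).choose (i+1) = 0 := Nat.choose_eq_zero_of_lt (by omega)
  have z2 : (0:ℕ).choose (i+2) = 0 := Nat.choose_eq_zero_of_lt (by omega)
  have z3 : (1:ℕ).choose (i+2) = 0 := Nat.choose_eq_zero_of_lt (by omega)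
  rw [z1, z2, z3]
  push_cast
  ring

lemma gg_zero_small (i j : ℕ) (s : ℕ) (hs : s ≤ 1) (hj : j ≤ s) : gg s i j = 0 := by
  interval_cases s <;> interval_cases j <;>
    simp [gg, Nat.choose_eq_zero_of_lt (show 0 < i+1 by omega),
      Nat.choose_eq_zero_of_lt (show 0 < i+2 by omega),
      Nat.choose_eq_zero_of_lt (show 1 < i+2 by omega)]

section
variable (D : ℕ) (c : ℕ → ℤ)

lemma c_nonneg (hpos : ∀ j, j ≤ D → 0 < c j) (hzero : ∀ j, D < j → c j = 0) :
    ∀ j, 0 ≤ c j := by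
  intro j
  by_cases h : j ≤ D
  · exact (hpos j h).le
  · rw [hzero j (by omega)]

lemma mono_aux (hpos : ∀ j, j ≤ D → 0 < c j) (hlc : ∀ j, c j * c (j+2) ≤ c (j+1)^2) :
    ∀ m u, u + m + 1 ≤ D → c u * c (u+m+1) ≤ c (u+1) * c (u+m) := by
  intro m
  induction m with
  | zero => intro u _; simp [mul_comm]
  | succ m ih =>
    intro u hD
    have ih' := ih u (by omega)
    have h1 : 0 < c (u+m+1) := hpos _ (by omega)
    have h2 : 0 ≤ c (u+m+2) := (hpos _ (by omega)).le
    have h3 : 0 ≤ c (u+1) := (hpos _ (by omega)).le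
    have hlc' := hlc (u+m)
    have key : (c u * c (u+m+2)) * c (u+m+1) ≤ (c (u+1) * c (u+m+1)) * c (u+m+1) := by
      calc (c u * c (u+m+2)) * c (u+m+1) = (c u * c (u+m+1)) * c (u+m+2) := by ring
        _ ≤ (c (u+1) * c (u+m)) * c (u+m+2) := mul_le_mul_of_nonneg_right ih' h2
        _ = c (u+1) * (c (u+m) * c (u+m+2)) := by ring
        _ ≤ c (u+1) * c (u+m+1)^2 := mul_le_mul_of_nonneg_left hlc' h3
        _ = (c (u+1) * c (u+m+1)) * c (u+m+1) := by ring
    have := le_of_mul_le_mul_right key h1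
    calc c u * c (u+m+1+1) = c u * c (u+m+2) := by ring_nf
      _ ≤ c (u+1) * c (u+m+1) := this
      _ = c (u+1) * c (u+m+1) := rfl

lemma mono' (hpos : ∀ j, j ≤ D → 0 < c j) (hzero : ∀ j, D < j → c j = 0)
    (hlc : ∀ j, c j * c (j+2) ≤ c (j+1)^2) :
    ∀ u v, u ≤ v → c u * c (v+1) ≤ c (u+1) * c v := by
  intro u v huv
  by_cases hD : v + 1 ≤ D
  · obtain ⟨m, rfl⟩ : ∃ m, v = u + m := ⟨v - u, by omega⟩
    exact mono_aux D c hpos hlc m u (by omega)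
  · rw [hzero (v+1) (by omega), mul_zero]
    exact mul_nonneg (c_nonneg D c hpos hzero (u+1)) (c_nonneg D c hpos hzero v)

lemma Q_ge (hpos : ∀ j, j ≤ D → 0 < c j) (hzero : ∀ j, D < j → c j = 0)
    (hlc : ∀ j, c j * c (j+2) ≤ c (j+1)^2) (s i : ℕ) :
    ∀ k t, 1 ≤ t → 2*t + k = s + 1 →
      (c t * c (s-t)) * EE s i t ≤ ∑ j ∈ Icc t (s-t), (c j * c (s-j)) * gg s i j := by
  have hnn := c_nonneg D c hpos hzero
  have hmono := mono' D c hpos hzero hlc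
  intro k
  induction k using Nat.strong_induction_on with
  | _ k IH =>
    intro t ht hk
    match k, hk with
    | 0, hk =>
      rw [Finset.Icc_eq_empty (by omega : ¬ t ≤ s - t), Finset.sum_empty,
        E_empty s i t ht (by omega), mul_zero]
    | 1, hk =>
      have hst : s - t = t := by omega
      rw [hst, Finset.Icc_self, Finset.sum_singleton, E_mid s i t ht (by omega), hst]
    | (k+2), hk =>
      have hts : t + 1 ≤ s - t := by omega
      have hsplit1 : Icc t (s-t) = (Ioc t (s-t)).cons t (by simp) :=
        Finset.Icc_eq_cons_Ioc (by omega)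
      have hsplit2 : Ioc t (s-t) = Icc (t+1) (s-t) := by rw [Finset.Icc_add_one_left_eq_Ioc]
      have hst1 : s - t = (s - (t+1)) + 1 := by omega
      have hsum : ∑ j ∈ Icc t (s-t), (c j * c (s-j)) * gg s i j
          = (c t * c (s-t)) * gg s i t
            + ((∑ j ∈ Icc (t+1) (s-(t+1)), (c j * c (s-j)) * gg s i j)
              + (c (s-t) * c (s-(s-t))) * gg s i (s-t)) := by
        rw [hsplit1, Finset.sum_cons, hsplit2, hst1,
          Finset.sum_Icc_succ_top (by omega) _]
      have hIH := IH k (by omega) (t+1) (by omega) (by omega)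
      have hEnn : 0 ≤ EE s i (t+1) := E_nonneg s i (t+1) (by omega) (by omega)
      have hw : c t * c (s-t) ≤ c (t+1) * c (s-(t+1)) := by
        have h := hmono t (s-t-1) (by omega)
        have e1 : s - t - 1 + 1 = s - t := by omega
        have e2 : s - t - 1 = s - (t+1) := by omega
        rw [e1, e2] at h
        exact h
      have hwE : (c t * c (s-t)) * EE s i (t+1) ≤ (c (t+1) * c (s-(t+1))) * EE s i (t+1) :=
        mul_le_mul_of_nonneg_right hw hEnn
      have hst2 : s - (s-t) = t := by omega
      have hwnn : 0 ≤ c t * c (s-t) := mul_nonneg (hnn t) (hnn _)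
      rw [hsum, E_step s i t ht (by omega), hst2]
      have : (c t * c (s-t)) * EE s i (t+1) ≤ ∑ j ∈ Icc (t+1) (s-(t+1)), (c j * c (s-j)) * gg s i j :=
        le_trans hwE hIH
      nlinarith [this, hwnn, mul_comm (c t) (c (s-t))]

lemma T_nonneg (hpos : ∀ j, j ≤ D → 0 < c j) (hzero : ∀ j, D < j → c j = 0)
    (hlc : ∀ j, c j * c (j+2) ≤ c (j+1)^2) (s i : ℕ) :
    0 ≤ ∑ j ∈ range (s+1), (c j * c (s-j)) * gg s i j := by
  have hnn := c_nonneg D c hpos hzero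
  by_cases hs : s ≤ 1
  · apply le_of_eq
    symm
    apply Finset.sum_eq_zero
    intro j hj
    rw [gg_zero_small i j s hs (by simp at hj; omega), mul_zero]
  · push_neg at hs
    have hs2 : 2 ≤ s := hs
    have hr : range (s+1) = Icc 0 s := by rw [Finset.range_eq_Ico, Finset.Ico_add_one_right_eq_Icc]
    have hsplit1 : Icc 0 s = (Ioc 0 s).cons 0 (by simp) := Finset.Icc_eq_cons_Ioc (by omega)
    have hsplit2 : Ioc 0 s = Icc 1 s := by exact (Finset.Icc_add_one_left_eq_Ioc (a := 0) (b := s)).symm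
    have hst1 : s = (s - 1) + 1 := by omega
    have hsum : ∑ j ∈ range (s+1), (c j * c (s-j)) * gg s i j
        = (c 0 * c s) * gg s i 0
          + ((∑ j ∈ Icc 1 (s-1), (c j * c (s-j)) * gg s i j)
            + (c s * c (s-s)) * gg s i s) := by
      rw [hr, hsplit1, Finset.sum_cons, hsplit2]
      rw [show Icc 1 s = Icc 1 (s-1+1) by rw [Nat.sub_add_cancel (by omega)]]
      rw [Finset.sum_Icc_succ_top (by omega)]
      rw [Nat.sub_add_cancel (show 1 ≤ s by omega), Nat.sub_zero]
    have hQ := Q_ge D c hpos hzero hlc s i (s-1) 1 le_rfl (by omega)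
    have h11 : s - 1 = s - 1 := rfl
    have hEnn : 0 ≤ EE s i 1 := E_nonneg s i 1 le_rfl (by omega)
    have hw : c 0 * c s ≤ c 1 * c (s-1) := by
      have h := mono' D c hpos hzero hlc 0 (s-1) (by omega)
      have e1 : s - 1 + 1 = s := by omega
      rw [e1] at h
      exact h
    have hwE : (c 0 * c s) * EE s i 1 ≤ (c 1 * c (s-1)) * EE s i 1 :=
      mul_le_mul_of_nonneg_right hw hEnn
    have hss : s - s = 0 := by omega
    have hwnn : 0 ≤ c 0 * c s := mul_nonneg (hnn 0) (hnn s)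
    have hEone := E_one s i hs2
    rw [hsum, hss]
    have hchain : (c 0 * c s) * EE s i 1 ≤ ∑ j ∈ Icc 1 (s-1), (c j * c (s-j)) * gg s i j :=
      le_trans hwE hQ
    nlinarith [hchain, hwnn, hEone, mul_comm (c 0) (c s)]
end

theorem transform_lc (D : ℕ) (c : ℕ → ℤ) (hpos : ∀ j, j ≤ D → 0 < c j)
    (hzero : ∀ j, D < j → c j = 0) (hlc : ∀ j, c j * c (j+2) ≤ c (j+1)^2) (i : ℕ) :
    (∑ j ∈ range (D+1), c j * (j.choose i : ℤ)) *
      (∑ j ∈ range (D+1), c j * (j.choose (i+2) : ℤ))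
    ≤ (∑ j ∈ range (D+1), c j * (j.choose (i+1) : ℤ))^2 := by
  set A : ℕ → Polynomial ℤ := fun p => ∑ j ∈ range (D+1), C (c j * (j.choose p : ℤ)) * X ^ j
    with hA
  have coeffA : ∀ p k, (A p).coeff k = c k * (k.choose p : ℤ) := by
    intro p k
    rw [hA]
    simp only [finset_sum_coeff, coeff_C_mul, coeff_X_pow, mul_ite, mul_one, mul_zero]
    rw [Finset.sum_ite_eq (range (D+1)) k (fun j => c j * (j.choose p : ℤ))]
    by_cases hk : k ∈ range (D+1)
    · simp [hk]
    · simp only [hk, if_false]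
      rw [hzero k (by simp at hk; omega)]
      ring
  have evalA : ∀ p, (A p).eval 1 = ∑ j ∈ range (D+1), c j * (j.choose p : ℤ) := by
    intro p
    rw [hA]
    simp [eval_finset_sum]
  set P : Polynomial ℤ := A (i+1) * A (i+1) - A i * A (i+2) with hP
  have coeffP : ∀ s, P.coeff s = ∑ j ∈ range (s+1), (c j * c (s-j)) * gg s i j := by
    intro s
    rw [hP, Polynomial.coeff_sub, Polynomial.coeff_mul, Polynomial.coeff_mul,
      ← Finset.sum_sub_distrib,
      Finset.Nat.sum_antidiagonal_eq_sum_range_succ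
        (fun a b => (A (i+1)).coeff a * (A (i+1)).coeff b - (A i).coeff a * (A (i+2)).coeff b)]
    apply Finset.sum_congr rfl
    intro j hj
    rw [coeffA, coeffA, coeffA, coeffA]
    unfold gg
    push_cast
    ring
  have hPnn : ∀ s, 0 ≤ P.coeff s := by
    intro s
    rw [coeffP s]
    exact T_nonneg D c hpos hzero hlc s i
  have hev : 0 ≤ P.eval 1 := by
    rw [Polynomial.eval_eq_sum_range]
    apply Finset.sum_nonneg
    intro s _
    simpa using hPnn s
  have hev2 : P.eval 1 = (∑ j ∈ range (D+1), c j * (j.choose (i+1) : ℤ))^2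
      - (∑ j ∈ range (D+1), c j * (j.choose i : ℤ)) *
        (∑ j ∈ range (D+1), c j * (j.choose (i+2) : ℤ)) := by
    rw [hP]
    simp only [Polynomial.eval_sub, Polynomial.eval_mul, evalA]
    ring
  linarith [hev2 ▸ hev]

/-- Coefficients of `(-1)^(n-1) p_n` in the variable `y = 1+x`. -/
def cc : ℕ → ℕ → ℤ
  | 0, _ => 0
  | 1, j => if j = 0 then 1 else 0
  | (n+2), j => ((n:ℤ)+1) * (if j = 0 then 0 else cc (n+1) (j-1))
      + (2*((n:ℤ)+1) - 1 - (j:ℤ)) * cc (n+1) j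

lemma cc_props (n : ℕ) (hn : 1 ≤ n) :
    (∀ j, j ≤ n-1 → 0 < cc n j) ∧ (∀ j, n-1 < j → cc n j = 0) ∧
    (∀ j, cc n j * cc n (j+2) ≤ cc n (j+1)^2) := by
  induction n, hn using Nat.le_induction with
  | base =>
    refine ⟨fun j hj => ?_, fun j hj => ?_, fun j => ?_⟩
    · interval_cases j; simp [cc]
    · simp only [cc]; rw [if_neg (by omega)]
    · have h2 : cc 1 (j+2) = 0 := by simp only [cc]; rw [if_neg (by omega)]
      rw [h2, mul_zero]
      positivity
  | succ n hn ih =>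
    obtain ⟨d, rfl⟩ : ∃ d, n = d+1 := ⟨n-1, by omega⟩
    obtain ⟨hpos, hzero, hlc⟩ := ih
    simp only [Nat.add_sub_cancel] at hpos hzero ⊢
    set c : ℕ → ℤ := cc (d+1) with hc
    have hpos' : ∀ j, j ≤ d → 0 < c j := hpos
    have hnn : ∀ j, 0 ≤ c j := by
      intro j
      by_cases h : j ≤ d
      · exact (hpos' j h).le
      · exact (hzero j (by omega)).ge
    have hmono := mono' d c hpos hzero hlc
    -- unfolded form of cc (d+2)
    have hB0 : cc (d+2) 0 = (2*((d:ℤ)+1) - 1) * c 0 := by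
      simp only [cc]
      push_cast
      ring
    have hBs : ∀ k, cc (d+2) (k+1) = ((d:ℤ)+1) * c k + (2*((d:ℤ)+1) - 1 - ((k:ℤ)+1)) * c (k+1) := by
      intro k
      simp only [cc]
      rw [if_neg (by omega)]
      simp only [Nat.add_sub_cancel]
      push_cast
      ring
    have bpos : ∀ j, j ≤ d+1 → 0 < cc (d+2) j := by
      intro j hj
      cases j with
      | zero =>
        rw [hB0]
        have := hpos' 0 (by omega)
        nlinarith [this, (show (0:ℤ) ≤ d by positivity)]
      | succ k =>
        rw [hBs k]
        have h1 : 0 < ((d:ℤ)+1) * c k := by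
          have := hpos' k (by omega)
          nlinarith [(show (0:ℤ) ≤ d by positivity)]
        have h2 : 0 ≤ (2*((d:ℤ)+1) - 1 - ((k:ℤ)+1)) * c (k+1) := by
          by_cases hk : k+1 ≤ d
          · apply mul_nonneg _ (hnn (k+1))
            have : (k:ℤ) + 1 ≤ d := by exact_mod_cast hk
            linarith
          · rw [hzero (k+1) (by omega), mul_zero]
        linarith
    have bzero : ∀ j, d+1 < j → cc (d+2) j = 0 := by
      intro j hj
      obtain ⟨k, rfl⟩ : ∃ k, j = k+1 := ⟨j-1, by omega⟩
      rw [hBs k, hzero k (by omega), hzero (k+1) (by omega)]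
      ring
    refine ⟨bpos, bzero, fun j => ?_⟩
    by_cases hj : j + 2 ≤ d + 1
    · -- main case
      cases j with
      | zero =>
        -- d ≥ 1 here
        have hd1 : 1 ≤ d := by omega
        rw [hB0, hBs 0, hBs 1]
        have c0 := hpos' 0 (by omega)
        have c1 := hpos' 1 (by omega)
        have c2 := hnn 2
        have hlc0 : c 0 * c 2 ≤ c 1^2 := hlc 0
        have hdz : (1:ℤ) ≤ (d:ℤ) := by exact_mod_cast hd1
        push_cast
        nlinarith [mul_le_mul_of_nonneg_left hlc0
            (by nlinarith : (0:ℤ) ≤ 4*(d:ℤ)^2 - 1),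
          mul_pos c0 c1, sq_nonneg (c 1), mul_nonneg (hnn 0) (hnn 1),
          mul_nonneg (mul_nonneg (hnn 0) (hnn 1)) (by linarith : (0:ℤ) ≤ 2*(d:ℤ)-1),
          sq_nonneg (c 0), mul_nonneg (sq_nonneg (c 0)) (by positivity : (0:ℤ) ≤ ((d:ℤ)+1)^2)]
      | succ k =>
        have hk2 : k + 2 ≤ d := by omega
        have hdk : (k:ℤ) + 2 ≤ (d:ℤ) := by exact_mod_cast hk2
        rw [hBs k, hBs (k+1), hBs (k+2)]
        have ck := hpos' k (by omega)
        have ck1 := hpos' (k+1) (by omega)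
        have ck2 := hpos' (k+2) (by omega)
        have ck3 := hnn (k+3)
        have A1 := hlc k
        have A3 := hlc (k+1)
        have A2 : c k * c (k+3) ≤ c (k+1) * c (k+2) := hmono k (k+2) (by omega)
        push_cast
        nlinarith [mul_le_mul_of_nonneg_left A1 (sq_nonneg ((d:ℤ)+1)),
          mul_le_mul_of_nonneg_left A2
            (mul_nonneg (by linarith : (0:ℤ) ≤ (d:ℤ)+1) (by linarith : (0:ℤ) ≤ 2*((d:ℤ)+1)-1-((k:ℤ)+3))),
          mul_le_mul_of_nonneg_left A3
            (mul_nonneg (by linarith : (0:ℤ) ≤ 2*((d:ℤ)+1)-1-((k:ℤ)+1))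
              (by linarith : (0:ℤ) ≤ 2*((d:ℤ)+1)-1-((k:ℤ)+3))),
          sq_nonneg (c (k+2))]
    · rw [bzero (j+2) (by omega), mul_zero]
      positivity

noncomputable def rr (n : ℕ) : Polynomial ℤ := ∑ j ∈ range n, C (cc n j) * (1+X)^j

lemma rr_rec (n : ℕ) (hn : 1 ≤ n) :
    rr (n+1) = (C ((n:ℤ)) * X + C (3*(n:ℤ) - 1)) * rr n - (1+X) * derivative (rr n) := by
  obtain ⟨d, rfl⟩ : ∃ d, n = d+1 := ⟨n-1, by omega⟩
  have hzero := (cc_props (d+1) (by omega)).2.1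
  -- expand rr (d+2)
  have hexp : rr (d+2) = (∑ j ∈ range (d+2), C (((d:ℤ)+1) * (if j = 0 then 0 else cc (d+1) (j-1))) * (1+X)^j)
      + (∑ j ∈ range (d+2), C ((2*((d:ℤ)+1) - 1 - (j:ℤ)) * cc (d+1) j) * (1+X)^j) := by
    rw [rr, ← Finset.sum_add_distrib]
    apply Finset.sum_congr rfl
    intro j hj
    rw [show cc (d+2) j = ((d:ℤ)+1) * (if j = 0 then 0 else cc (d+1) (j-1))
      + (2*((d:ℤ)+1) - 1 - (j:ℤ)) * cc (d+1) j from rfl, C_add]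
    ring
  have hS1 : (∑ j ∈ range (d+2), C (((d:ℤ)+1) * (if j = 0 then 0 else cc (d+1) (j-1))) * (1+X)^j)
      = C ((d:ℤ)+1) * ((1+X) * rr (d+1)) := by
    rw [Finset.sum_range_succ']
    rw [show (if (0:ℕ) = 0 then (0:ℤ) else cc (d+1) (0-1)) = 0 from if_pos rfl]
    rw [mul_zero, map_zero, zero_mul, add_zero, rr, Finset.mul_sum, Finset.mul_sum]
    apply Finset.sum_congr rfl
    intro j hj
    rw [if_neg (Nat.succ_ne_zero j), Nat.add_sub_cancel, C_mul]
    ring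
  have hS2a : (∑ j ∈ range (d+2), C ((2*((d:ℤ)+1) - 1 - (j:ℤ)) * cc (d+1) j) * (1+X)^j)
      = C (2*((d:ℤ)+1) - 1) * rr (d+1)
        - (∑ j ∈ range (d+2), C ((j:ℤ) * cc (d+1) j) * (1+X)^j) := by
    rw [Finset.sum_range_succ (fun j => C ((2*((d:ℤ)+1) - 1 - (j:ℤ)) * cc (d+1) j) * (1+X)^j) (d+1),
      Finset.sum_range_succ (fun j => C ((j:ℤ) * cc (d+1) j) * (1+X)^j) (d+1),
      hzero (d+1) (by omega)]
    simp only [mul_zero, map_zero, zero_mul, add_zero]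
    rw [rr, Finset.mul_sum, ← Finset.sum_sub_distrib]
    apply Finset.sum_congr rfl
    intro j hj
    rw [show (2*((d:ℤ)+1) - 1 - (j:ℤ)) * cc (d+1) j
      = (2*((d:ℤ)+1) - 1) * cc (d+1) j - (j:ℤ) * cc (d+1) j from by ring, C_sub, C_mul, C_mul]
    ring
  have hS2b : (∑ j ∈ range (d+2), C ((j:ℤ) * cc (d+1) j) * (1+X)^j)
      = (1+X) * derivative (rr (d+1)) := by
    rw [Finset.sum_range_succ (fun j => C ((j:ℤ) * cc (d+1) j) * (1+X)^j) (d+1),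
      hzero (d+1) (by omega)]
    simp only [mul_zero, map_zero, zero_mul, add_zero]
    rw [rr, derivative_sum, Finset.mul_sum]
    apply Finset.sum_congr rfl
    intro j hj
    rw [derivative_C_mul, derivative_pow]
    cases j with
    | zero => simp
    | succ k =>
      simp only [Nat.add_sub_cancel]
      have hd1 : derivative (1 + X : Polynomial ℤ) = 1 := by
        rw [derivative_add, derivative_one, derivative_X, zero_add]
      rw [hd1, C_mul]
      push_cast
      ring
  rw [hexp, hS1, hS2a, hS2b]
  have hC : C (3*((d:ℤ)+1) - 1) = C ((d:ℤ)+1) + C (2*((d:ℤ)+1) - 1) := by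
    rw [← C_add]; ring_nf
  push_cast
  rw [hC]
  ring

lemma p_eq (n : ℕ) (hn : 1 ≤ n) : ((-1:ℤ)^(n-1)) • p n = rr n := by
  induction n, hn using Nat.le_induction with
  | base =>
    show ((-1:ℤ)^0) • p 1 = rr 1
    rw [pow_zero, one_smul]
    rw [show p 1 = 1 from rfl, rr]
    simp [cc]
  | succ n hn ih =>
    obtain ⟨d, rfl⟩ : ∃ d, n = d+1 := ⟨n-1, by omega⟩
    simp only [Nat.add_sub_cancel] at ih ⊢
    have hp : p (d+1) = ((-1:ℤ)^d) • rr (d+1) := by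
      rw [← ih, smul_smul, ← pow_add]
      rw [Even.neg_one_pow ⟨d, by ring⟩, one_smul]
    have hrec := rr_rec (d+1) (by omega)
    have hC : C ((-1:ℤ)^(d+1)) * C ((-1:ℤ)^d) = -1 := by
      rw [← C_mul, ← pow_add, Odd.neg_one_pow ⟨d, by ring⟩, map_neg, C_1]
    rw [show p (d+2) = -(C ((d : ℤ) + 1) * X + C (3 * ((d : ℤ) + 1) - 1)) * p (d+1) +
      (1 + X) * derivative (p (d+1)) from rfl, hp, hrec]
    rw [smul_eq_C_mul, smul_eq_C_mul, derivative_C_mul]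
    push_cast
    linear_combination ((1+X) * derivative (rr (d+1))
      - (C ((d:ℤ)+1) * X + C (3*((d:ℤ)+1) - 1)) * (rr (d+1))) * hC

/-- The coefficient sequence of `(-1)^(n-1) • p n`. -/
noncomputable def aa (n i : ℕ) : ℤ := ∑ j ∈ range n, cc n j * (j.choose i : ℤ)

lemma coeff_eq (n : ℕ) (hn : 1 ≤ n) (i : ℕ) :
    (((-1:ℤ)^(n-1)) • p n).coeff i = aa n i := by
  rw [p_eq n hn, rr, aa, finset_sum_coeff]
  apply Finset.sum_congr rfl
  intro j hj
  rw [coeff_C_mul, show (1 + X : Polynomial ℤ) = X + 1 by ring, coeff_X_add_one_pow]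

lemma chain_up (f : ℕ → ℤ) (B : ℕ) (step : ∀ k, k < B → f k ≤ f (k+1)) :
    ∀ t i, i + t ≤ B → f i ≤ f (i+t) := by
  intro t
  induction t with
  | zero => intro i _; simp
  | succ t ih =>
    intro i h
    calc f i ≤ f (i+t) := ih i (by omega)
      _ ≤ f (i+t+1) := step (i+t) (by omega)

lemma chain_dn (f : ℕ → ℤ) (A B : ℕ) (step : ∀ k, A ≤ k → k+1 ≤ B → f (k+1) ≤ f k) :
    ∀ t i, A ≤ i → i + t ≤ B → f (i+t) ≤ f i := by
  intro t
  induction t with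
  | zero => intro i _ _; simp
  | succ t ih =>
    intro i hA h
    calc f (i+t+1) ≤ f (i+t) := step (i+t) (by omega) (by omega)
      _ ≤ f i := ih i hA (by omega)


/-- For `n ≥ 1`, the coefficients of `(−1)^{n−1} p_n(x)` (in degrees `0, …, n−1`) are
positive, log-concave, and hence unimodal. -/
theorem p_coeffs_positive_log_concave_unimodal (n : ℕ) (hn : 1 ≤ n) :
    (∀ i < n, 0 < (((-1 : ℤ) ^ (n - 1)) • p n).coeff i) ∧
    (∀ i, 1 ≤ i →
      (((-1 : ℤ) ^ (n - 1)) • p n).coeff (i - 1) * (((-1 : ℤ) ^ (n - 1)) • p n).coeff (i + 1) ≤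
        ((((-1 : ℤ) ^ (n - 1)) • p n).coeff i) ^ 2) ∧
    (∃ m ≤ n - 1,
      (∀ i j, i ≤ j → j ≤ m →
        (((-1 : ℤ) ^ (n - 1)) • p n).coeff i ≤ (((-1 : ℤ) ^ (n - 1)) • p n).coeff j) ∧
      (∀ i j, m ≤ i → i ≤ j → j ≤ n - 1 →
        (((-1 : ℤ) ^ (n - 1)) • p n).coeff j ≤ (((-1 : ℤ) ^ (n - 1)) • p n).coeff i)) := by

  simp only [coeff_eq n hn]
  obtain ⟨hpos, hzero, hlc⟩ := cc_props n hn
  have hccnn : ∀ j, 0 ≤ cc n j := by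
    intro j
    by_cases h : j ≤ n-1
    · exact (hpos j h).le
    · exact (hzero j (by omega)).ge
  have apos : ∀ i, i ≤ n-1 → 0 < aa n i := by
    intro i hi
    apply Finset.sum_pos'
    · intro j _
      exact mul_nonneg (hccnn j) (by positivity)
    · refine ⟨i, Finset.mem_range.mpr (by omega), ?_⟩
      rw [Nat.choose_self]
      simpa using hpos i hi
  have azero : ∀ i, n-1 < i → aa n i = 0 := by
    intro i hi
    apply Finset.sum_eq_zero
    intro j hj
    rw [Nat.choose_eq_zero_of_lt (by simp at hj; omega)]
    simp
  have alc : ∀ i, aa n i * aa n (i+2) ≤ aa n (i+1)^2 := by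
    intro i
    have := transform_lc (n-1) (cc n) hpos hzero hlc i
    rw [show n-1+1 = n from by omega] at this
    exact this
  have downclosed : ∀ k, k + 2 ≤ n → aa n (k+1) ≤ aa n (k+2) → aa n k ≤ aa n (k+1) := by
    intro k hk h
    by_cases h2 : k+2 ≤ n-1
    · have hp2 := apos (k+2) h2
      have hp1 := apos (k+1) (by omega)
      have hmul : aa n k * aa n (k+2) ≤ aa n (k+1) * aa n (k+2) := by
        nlinarith [alc k]
      exact le_of_mul_le_mul_right hmul hp2
    · exfalso
      rw [azero (k+2) (by omega)] at h
      have := apos (k+1) (by omega)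
      linarith
  have hex : ∃ k, n-1 ≤ k ∨ aa n (k+1) < aa n k := ⟨n-1, Or.inl le_rfl⟩
  set m := Nat.find hex with hm
  have hm_le : m ≤ n-1 := Nat.find_min' hex (Or.inl le_rfl)
  have hm_lt : ∀ k, k < m → aa n k ≤ aa n (k+1) ∧ k < n-1 := by
    intro k hk
    have := Nat.find_min hex hk
    push_neg at this
    exact ⟨this.2, this.1⟩
  have step_dec : ∀ k, m ≤ k → k+1 ≤ n-1 → aa n (k+1) ≤ aa n k := by
    intro k hmk hkn
    by_contra hcon
    push_neg at hcon
    have key : ∀ t j, j + t = k → m ≤ j → aa n j ≤ aa n (j+1) := by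
      intro t
      induction t with
      | zero =>
        intro j hj _
        have hjk : j = k := by omega
        subst hjk
        exact hcon.le
      | succ t ih =>
        intro j hjk hmj
        have h1 : aa n (j+1) ≤ aa n (j+2) := ih (j+1) (by omega) (by omega)
        exact downclosed j (by omega) h1
    have key0 : ∀ t j, j + t = k → m ≤ j → aa n j ≤ aa n (j+1) := key
    have hmm : aa n m ≤ aa n (m+1) := key (k-m) m (by omega) le_rfl
    have hspec := Nat.find_spec hex
    rw [← hm] at hspec
    rcases hspec with h | h
    · omega
    · linarith
  refine ⟨fun i hi => apos i (by omega), fun i hi => ?_, m, hm_le, fun i j hij hjm => ?_, fun i j hmi hij hjn => ?_⟩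
  · obtain ⟨k, rfl⟩ : ∃ k, i = k+1 := ⟨i-1, by omega⟩
    simpa [Nat.add_sub_cancel] using alc k
  · obtain ⟨t, rfl⟩ : ∃ t, j = i + t := ⟨j-i, by omega⟩
    exact chain_up (aa n) m (fun k hk => (hm_lt k hk).1) t i (by omega)
  · obtain ⟨t, rfl⟩ : ∃ t, j = i + t := ⟨j-i, by omega⟩
    exact chain_dn (aa n) m (n-1) step_dec t i hmi (by omega)
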